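/- (Optimal discriminator logits are the log density ratio) Let A be a finite type and let p, q be pmfs on A with p(a) > 0 and q(a) > 0 for all a. For a function D : A → ℝ define the discriminator objective L(D) = Σ_a p(a)·log σ(D(a)) + Σ_a q(a)·log(1 − σ(D(a))), where σ(t) = 1/(1 + e^{−t}) is the logistic sigmoid. Then the function D*(a) = log(p(a)/q(a)) satisfies L(D) ≤ L(D*) for every D : A → ℝ, with equality if and only if D(a) = D*(a) for all a. -/

import Mathlib

lemma pointwise_le_aux (P Q x : ℝ) (hP : 0 < P) (hQ : 0 < Q)
    (hx0 : 0 < x) (hx1 : x < 1) :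
    P * Real.log x + Q * Real.log (1 - x) ≤
      P * Real.log (P / (P + Q)) + Q * Real.log (1 - P / (P + Q)) := by
  have hs : 0 < P + Q := by linarith
  have hy0 : 0 < P / (P + Q) := by positivity
  have hy1 : P / (P + Q) < 1 := by rw [div_lt_one hs]; linarith
  set y := P / (P + Q) with hy
  have l1 : Real.log (x / y) ≤ x / y - 1 := Real.log_le_sub_one_of_pos (by positivity)
  have l2 : Real.log ((1 - x) / (1 - y)) ≤ (1 - x) / (1 - y) - 1 :=
    Real.log_le_sub_one_of_pos (by apply div_pos <;> linarith)
  have e1 : P * Real.log (x / y) = P * Real.log x - P * Real.log y := by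
    rw [Real.log_div hx0.ne' hy0.ne']; ring
  have e2 : Q * Real.log ((1 - x) / (1 - y)) =
      Q * Real.log (1 - x) - Q * Real.log (1 - y) := by
    rw [Real.log_div (by linarith) (by linarith)]; ring
  have key : P * (x / y - 1) + Q * ((1 - x) / (1 - y) - 1) = 0 := by
    rw [hy]; field_simp [hQ.ne']; ring
  nlinarith [mul_le_mul_of_nonneg_left l1 hP.le, mul_le_mul_of_nonneg_left l2 hQ.le]

lemma pointwise_lt_aux (P Q x : ℝ) (hP : 0 < P) (hQ : 0 < Q)
    (hx0 : 0 < x) (hx1 : x < 1) (hne : x ≠ P / (P + Q)) :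
    P * Real.log x + Q * Real.log (1 - x) <
      P * Real.log (P / (P + Q)) + Q * Real.log (1 - P / (P + Q)) := by
  have hs : 0 < P + Q := by linarith
  have hy0 : 0 < P / (P + Q) := by positivity
  have hy1 : P / (P + Q) < 1 := by rw [div_lt_one hs]; linarith
  set y := P / (P + Q) with hy
  have hr1 : x / y ≠ 1 := by
    intro h
    exact hne (by field_simp at h; linarith [h])
  have l1 : Real.log (x / y) < x / y - 1 :=
    Real.log_lt_sub_one_of_pos (by positivity) hr1
  have l2 : Real.log ((1 - x) / (1 - y)) ≤ (1 - x) / (1 - y) - 1 :=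
    Real.log_le_sub_one_of_pos (by apply div_pos <;> linarith)
  have e1 : P * Real.log (x / y) = P * Real.log x - P * Real.log y := by
    rw [Real.log_div hx0.ne' hy0.ne']; ring
  have e2 : Q * Real.log ((1 - x) / (1 - y)) =
      Q * Real.log (1 - x) - Q * Real.log (1 - y) := by
    rw [Real.log_div (by linarith) (by linarith)]; ring
  have key : P * (x / y - 1) + Q * ((1 - x) / (1 - y) - 1) = 0 := by
    rw [hy]; field_simp [hQ.ne']; ring
  nlinarith [mul_lt_mul_of_pos_left l1 hP, mul_le_mul_of_nonneg_left l2 hQ.le]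

theorem optimal_discriminator_is_log_density_ratio
    {A : Type*} [Fintype A] (p q : A → ℝ)
    (hp0 : ∀ a, 0 < p a) (hp1 : ∑ a, p a = 1)
    (hq0 : ∀ a, 0 < q a) (hq1 : ∑ a, q a = 1)
    (sig : ℝ → ℝ) (hsig : ∀ t, sig t = 1 / (1 + Real.exp (-t)))
    (L : (A → ℝ) → ℝ)
    (hL : ∀ D, L D = (∑ a, p a * Real.log (sig (D a))) +
      ∑ a, q a * Real.log (1 - sig (D a)))
    (Dstar : A → ℝ) (hDstar : ∀ a, Dstar a = Real.log (p a / q a)) :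
    ∀ D : A → ℝ, L D ≤ L Dstar ∧ (L D = L Dstar ↔ ∀ a, D a = Dstar a) := by
  -- basic sigmoid facts
  have hden : ∀ t : ℝ, 0 < 1 + Real.exp (-t) := fun t => by positivity
  have hsig0 : ∀ t, 0 < sig t := fun t => by rw [hsig]; positivity
  have hsig1 : ∀ t, sig t < 1 := fun t => by
    rw [hsig]
    rw [div_lt_one (hden t)]
    linarith [Real.exp_pos (-t)]
  have hsiginj : ∀ s t, sig s = sig t → s = t := by
    intro s t h
    rw [hsig, hsig, div_eq_div_iff (hden s).ne' (hden t).ne'] at h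
    have : Real.exp (-s) = Real.exp (-t) := by linarith
    have := Real.exp_injective this
    linarith
  -- sigmoid at Dstar
  have hsigD : ∀ a, sig (Dstar a) = p a / (p a + q a) := by
    intro a
    have hpa := hp0 a; have hqa := hq0 a
    rw [hsig, hDstar, ← Real.log_inv, Real.exp_log (by positivity)]
    rw [inv_div]
    field_simp
  -- rewrite L as a single sum
  have hL' : ∀ D, L D = ∑ a, (p a * Real.log (sig (D a)) +
      q a * Real.log (1 - sig (D a))) := by
    intro D; rw [hL, Finset.sum_add_distrib]
  intro D
  have hterm : ∀ a ∈ Finset.univ (α := A),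
      p a * Real.log (sig (D a)) + q a * Real.log (1 - sig (D a)) ≤
      p a * Real.log (sig (Dstar a)) + q a * Real.log (1 - sig (Dstar a)) := by
    intro a _
    rw [hsigD a]
    exact pointwise_le_aux _ _ _ (hp0 a) (hq0 a) (hsig0 _) (hsig1 _)
  have hle : L D ≤ L Dstar := by
    rw [hL', hL']
    exact Finset.sum_le_sum hterm
  have hlt : (∃ a, D a ≠ Dstar a) → L D < L Dstar := by
    rintro ⟨a, ha⟩
    rw [hL', hL']
    refine Finset.sum_lt_sum hterm ⟨a, Finset.mem_univ a, ?_⟩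
    have hne : sig (D a) ≠ p a / (p a + q a) := by
      rw [← hsigD a]
      exact fun h => ha (hsiginj _ _ h)
    rw [hsigD a]
    exact pointwise_lt_aux _ _ _ (hp0 a) (hq0 a) (hsig0 _) (hsig1 _) hne
  refine ⟨hle, ⟨?_, ?_⟩⟩
  · intro heq
    by_contra h
    push_neg at h
    exact absurd heq (ne_of_lt (hlt h))
  · intro h
    have : D = Dstar := funext h
    rw [this]
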